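/- arXiv:1811.04388 — 2 statements merged into one kernel-verified Lean document; each statement's English description precedes it below -/
import Mathlib

section
/- Let (R, 𝔪, k) be a one-dimensional Cohen–Macaulay local ring admitting a canonical module, let I be a strongly Cohen–Macaulay ideal of R, and let M be a torsion-free finite R-module such that (0 :_M I) ≠ 0. Then δ_R(M/(0 :_M I)) = 0. -/
/-! Background definitions: depth, (maximal) Cohen–Macaulay modules and rings,
Koszul homology of an ideal, strongly Cohen–Macaulay ideals, Auslander's
delta invariant, canonical modules, finite injective dimension, etc. -/

open CategoryTheory Opposite Pointwise

universe u v

namespace Paper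

section Depth

variable (A : Type u) [CommRing A]

/-- The depth of a module: the supremum of lengths of regular sequences contained in the
Jacobson radical (for a local ring, the maximal ideal). -/
noncomputable def depth (M : Type v) [AddCommGroup M] [Module A M] : ℕ∞ :=
  sSup {n : ℕ∞ | ∃ rs : List A, (∀ r ∈ rs, r ∈ (⊥ : Ideal A).jacobson) ∧
    RingTheory.Sequence.IsRegular M rs ∧ (rs.length : ℕ∞) = n}

/-- The supremum of lengths of `M`-regular sequences contained in the ideal `I`
(the grade of `I` on `M`). -/
noncomputable def grade (I : Ideal A) (M : Type v) [AddCommGroup M] [Module A M] : ℕ∞ :=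
  sSup {n : ℕ∞ | ∃ rs : List A, (∀ r ∈ rs, r ∈ I) ∧
    RingTheory.Sequence.IsRegular M rs ∧ (rs.length : ℕ∞) = n}

/-- A maximal Cohen–Macaulay module: a nonzero finite module whose depth equals the
Krull dimension of the ring. -/
def IsMCM (M : Type v) [AddCommGroup M] [Module A M] : Prop :=
  Module.Finite A M ∧ Nontrivial M ∧ ((depth A M : WithBot ℕ∞) = ringKrullDim A)

/-- A Cohen–Macaulay module: a finite module which is zero or whose depth equals the Krull
dimension of its support. -/
def IsCMMod (M : Type v) [AddCommGroup M] [Module A M] : Prop :=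
  Module.Finite A M ∧ (Subsingleton M ∨
    (depth A M : WithBot ℕ∞) = ringKrullDim (A ⧸ Module.annihilator A M))

/-- A Cohen–Macaulay (local) ring. -/
def IsCMRing : Prop := (depth A A : WithBot ℕ∞) = ringKrullDim A

end Depth

section Mu

variable (A : Type u) [CommRing A]

/-- The minimal number of generators of a module. -/
noncomputable def muMod (M : Type v) [AddCommGroup M] [Module A M] : ℕ :=
  sInf {n : ℕ | ∃ f : Fin n → M, Submodule.span A (Set.range f) = ⊤}

/-- The minimal number of generators of an ideal. -/
noncomputable def muIdeal (I : Ideal A) : ℕ :=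
  sInf {n : ℕ | ∃ f : Fin n → A, Ideal.span (Set.range f) = I}

end Mu

section Delta

variable (A : Type u) [CommRing A]

/-- `M` has no nonzero free direct summand. -/
def NoFreeSummand (M : Type v) [AddCommGroup M] [Module A M] : Prop :=
  ∀ N N' : Submodule A M, IsCompl N N' → Module.Free A N → N = ⊥

/-- `Mᶜᵐ`: the sum of all submodules of `M` which are images of maximal Cohen–Macaulay
`A`-modules having no nonzero free direct summand. -/
noncomputable def cmSubmodule (M : Type v) [AddCommGroup M] [Module A M] : Submodule A M :=
  sSup {N : Submodule A M | ∃ (L : Type u) (_ : AddCommGroup L) (_ : Module A L)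
    (φ : L →ₗ[A] M), IsMCM A L ∧ NoFreeSummand A L ∧ N = LinearMap.range φ}

/-- Auslander's delta invariant: `δ_A(M) = μ_A(M / Mᶜᵐ)`. -/
noncomputable def delta (M : Type v) [AddCommGroup M] [Module A M] : ℕ :=
  muMod A (M ⧸ cmSubmodule A M)

end Delta

section Koszul

variable (A : Type u) [CommRing A] {n : ℕ}

/-- The `i`-th differential of the Koszul complex on the sequence `g` with coefficients
in `M`, realized on the free modules with bases the `(i+1)`- resp. `i`-element subsets
of `Fin n`. -/
noncomputable def koszulD (g : Fin n → A) (M : Type v) [AddCommGroup M] [Module A M] (i : ℕ) :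
    ({s : Finset (Fin n) // s.card = i + 1} → M) →ₗ[A]
      ({s : Finset (Fin n) // s.card = i} → M) where
  toFun f T := ∑ j ∈ T.1ᶜ.attach,
    ((-1 : A) ^ (T.1.filter (fun a => a < j.1)).card * g j.1) •
      f ⟨insert j.1 T.1, by
        rw [Finset.card_insert_of_notMem (Finset.mem_compl.mp j.2), T.2]⟩
  map_add' f f' := by
    funext T
    simp [smul_add, Finset.sum_add_distrib]
  map_smul' a f := by
    funext T
    simp only [Pi.smul_apply, RingHom.id_apply, Finset.smul_sum]
    exact Finset.sum_congr rfl fun j _ => smul_comm _ _ _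

/-- The differential of the Koszul complex leaving homological degree `i`. -/
noncomputable def koszulDFrom (g : Fin n → A) (M : Type v) [AddCommGroup M] [Module A M] :
    ∀ i : ℕ, ({s : Finset (Fin n) // s.card = i} → M) →ₗ[A]
      ({s : Finset (Fin n) // s.card = i - 1} → M)
  | 0 => 0
  | (i + 1) => koszulD A g M i

/-- The `i`-th Koszul homology of the sequence `g` with coefficients in `M`:
cycles modulo boundaries. -/
noncomputable def koszulHomology (g : Fin n → A) (M : Type v) [AddCommGroup M] [Module A M]
    (i : ℕ) : Type _ :=
  ↥(LinearMap.ker (koszulDFrom A g M i)) ⧸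
    Submodule.comap (LinearMap.ker (koszulDFrom A g M i)).subtype
      (LinearMap.range (koszulD A g M i))

noncomputable instance (g : Fin n → A) (M : Type v) [AddCommGroup M] [Module A M] (i : ℕ) :
    AddCommGroup (koszulHomology A g M i) := by
  unfold koszulHomology; infer_instance

noncomputable instance (g : Fin n → A) (M : Type v) [AddCommGroup M] [Module A M] (i : ℕ) :
    Module A (koszulHomology A g M i) := by
  unfold koszulHomology; infer_instance

/-- An ideal `I` is strongly Cohen–Macaulay if all the Koszul homology modules of `R` with
respect to (any) generating set of `I` are Cohen–Macaulay modules. -/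
def IsStronglyCM (I : Ideal A) : Prop :=
  ∀ (m : ℕ) (g : Fin m → A), Ideal.span (Set.range g) = I →
    ∀ i : ℕ, IsCMMod A (koszulHomology A g A i)

end Koszul

section Height

variable (A : Type u) [CommRing A]

/-- The height of an ideal: the infimum of the heights of the primes containing it. -/
noncomputable def idealHeight (I : Ideal A) : ℕ∞ :=
  ⨅ (P : {P : PrimeSpectrum A // I ≤ P.asIdeal}), Order.height P.1

end Height

section InjDim

variable (A : Type u) [CommRing A]

/-- The `i`-th Ext module `Ext_A^i(M, N)`. -/
noncomputable def extMod (M N : Type u) [AddCommGroup M] [Module A M]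
    [AddCommGroup N] [Module A N] (i : ℕ) : Type u :=
  ((Ext A (ModuleCat.{u} A) i).obj (op (ModuleCat.of A M))).obj (ModuleCat.of A N)

noncomputable instance (M N : Type u) [AddCommGroup M] [Module A M]
    [AddCommGroup N] [Module A N] (i : ℕ) : AddCommGroup (extMod A M N i) := by
  unfold extMod; infer_instance

noncomputable instance (M N : Type u) [AddCommGroup M] [Module A M]
    [AddCommGroup N] [Module A N] (i : ℕ) : Module A (extMod A M N i) := by
  unfold extMod; infer_instance

/-- A module has finite injective dimension iff the functors `Ext^i(-, Y)` vanish
uniformly in large degrees. -/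
def HasFiniteInjDim (Y : Type u) [AddCommGroup Y] [Module A Y] : Prop :=
  ∃ d : ℕ, ∀ i > d, ∀ (N : Type u) (_ : AddCommGroup N) (_ : Module A N),
    Subsingleton (extMod A N Y i)

/-- A Gorenstein (local) ring: Cohen–Macaulay and of finite injective dimension
over itself. -/
def IsGorensteinRing : Prop := IsCMRing A ∧ HasFiniteInjDim A A

end InjDim

section Canonical

variable (A : Type u) [CommRing A] [IsLocalRing A]

/-- A canonical module of a Cohen–Macaulay local ring: a maximal Cohen–Macaulay module of
finite injective dimension and of type one. -/
def IsCanonicalModule (ω : Type u) [AddCommGroup ω] [Module A ω] : Prop :=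
  IsMCM A ω ∧ HasFiniteInjDim A ω ∧
    ∃ d : ℕ, (d : WithBot ℕ∞) = ringKrullDim A ∧
      Nonempty ((extMod A (IsLocalRing.ResidueField A) ω d) ≃ₗ[A] IsLocalRing.ResidueField A)

/-- `A` admits a canonical module. -/
def HasCanonicalModule : Prop :=
  ∃ (ω : Type u) (_ : AddCommGroup ω) (_ : Module A ω), IsCanonicalModule A ω

/-- A regular local ring: the maximal ideal is generated by `dim A` elements. -/
def IsRegularLocal : Prop :=
  IsNoetherianRing A ∧
    ((muIdeal A (IsLocalRing.maximalIdeal A) : ℕ∞) : WithBot ℕ∞) = ringKrullDim A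

end Canonical

section TorsionFree

variable (A : Type u) [CommRing A]

/-- A torsion-free module: every non-zero-divisor of `A` acts injectively. -/
def TorsionFree (M : Type v) [AddCommGroup M] [Module A M] : Prop :=
  ∀ r ∈ nonZeroDivisors A, IsSMulRegular M r

end TorsionFree

end Paper

section AuxLemmas

open IsLocalRing RingTheory.Sequence

lemma aux_minimal {R : Type u} [CommRing R] [IsLocalRing R] (hdim : ringKrullDim R = 1)
    {p : Ideal R} (hp : p.IsPrime) (hpm : p ≠ maximalIdeal R) :
    p ∈ minimalPrimes R := by
  rw [minimalPrimes_eq_minimals]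
  refine ⟨hp, fun q hq hqp => ?_⟩
  by_contra hcon
  have h1 : q < p := lt_of_le_of_ne hqp (fun h => hcon (h ▸ le_refl _))
  have h2 : p < maximalIdeal R := lt_of_le_of_ne (le_maximalIdeal hp.ne_top) hpm
  haveI : (maximalIdeal R).IsPrime := (maximalIdeal.isMaximal R).isPrime
  have h3 : ((2:ℕ) : WithBot ℕ∞) ≤ ringKrullDim R := by
    let s : LTSeries (PrimeSpectrum R) :=
      ⟨2, ![⟨q, hq⟩, ⟨p, hp⟩, ⟨maximalIdeal R, inferInstance⟩], by
        intro i
        fin_cases i <;> simp [← PrimeSpectrum.asIdeal_lt_asIdeal] <;> [exact h1; exact h2]⟩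
    exact Order.LTSeries.length_le_krullDim s
  rw [hdim] at h3
  norm_num at h3

lemma aux_nilp {R : Type u} [CommRing R] {p : Ideal R} (hmin : p ∈ minimalPrimes R) {r : R}
    (hr : r ∈ p) : ∃ s, s ∉ p ∧ ∃ k : ℕ, s * r ^ k = 0 := by
  haveI : p.IsPrime := hmin.1.1
  have h1 : algebraMap R (Localization p.primeCompl) r ∈ maximalIdeal _ :=
    (IsLocalization.AtPrime.to_map_mem_maximal_iff _ p r).mpr hr
  obtain ⟨k, hk⟩ := (have := Ring.KrullDimLE.of_isLocalization p hmin (Localization p.primeCompl); Ring.KrullDimLE.isNilpotent_iff_mem_maximalIdeal).mpr h1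
  rw [← map_pow] at hk
  obtain ⟨⟨s, hs⟩, hsk⟩ := (IsLocalization.map_eq_zero_iff p.primeCompl _ _).mp hk
  exact ⟨s, hs, k, hsk⟩

lemma aux_descend {R : Type u} [CommRing R] (I : Ideal R) :
    ∀ (n : ℕ) (s : R), s ≠ 0 → (∀ a ∈ I ^ n, s * a = 0) →
      ∃ y : R, y ≠ 0 ∧ ∀ a ∈ I, a * y = 0 := by
  intro n
  induction n with
  | zero =>
    intro s hs h
    exact absurd (by simpa using h 1 (by simp [Ideal.one_eq_top])) hs
  | succ n ih =>
    intro s hs h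
    by_cases hall : ∀ a ∈ I ^ n, s * a = 0
    · exact ih s hs hall
    · push_neg at hall
      obtain ⟨t, ht, hst⟩ := hall
      refine ⟨s * t, hst, fun a ha => ?_⟩
      have h2 : t * a ∈ I ^ (n + 1) := by
        rw [pow_succ]; exact Ideal.mul_mem_mul ht ha
      calc a * (s * t) = s * (t * a) := by ring
      _ = 0 := h _ h2

lemma exists_ann {R : Type u} [CommRing R] [IsNoetherianRing R] {p I : Ideal R}
    (hmin : p ∈ minimalPrimes R) (hIp : I ≤ p) :
    ∃ y : R, y ≠ 0 ∧ ∀ a ∈ I, a * y = 0 := by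
  classical
  haveI : p.IsPrime := hmin.1.1
  set S := Localization p.primeCompl
  have hJ : I.map (algebraMap R S) ≤ Ideal.radical ⊥ := by
    rw [Ideal.map_le_iff_le_comap]
    intro a ha
    have h1 : algebraMap R S a ∈ maximalIdeal S :=
      (IsLocalization.AtPrime.to_map_mem_maximal_iff _ p a).mpr (hIp ha)
    have h2 : IsNilpotent (algebraMap R S a) :=
      (have := Ring.KrullDimLE.of_isLocalization p hmin (Localization p.primeCompl); Ring.KrullDimLE.isNilpotent_iff_mem_maximalIdeal).mpr h1
    simpa [Ideal.mem_comap, nilradical] using mem_nilradical.mpr h2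
  obtain ⟨n, hn⟩ := Ideal.exists_pow_le_of_le_radical_of_fg hJ
    (Ideal.FG.map (IsNoetherian.noetherian I) _)
  have hmap : ∀ a ∈ I ^ n, algebraMap R S a = 0 := by
    intro a ha
    have h3 : algebraMap R S a ∈ (I.map (algebraMap R S)) ^ n := by
      rw [← Ideal.map_pow]
      exact Ideal.mem_map_of_mem _ ha
    simpa using hn h3
  obtain ⟨B, hB⟩ := IsNoetherian.noetherian (I ^ n)
  have key : ∀ b ∈ B, ∃ s : R, s ∈ p.primeCompl ∧ s * b = 0 := by
    intro b hb
    obtain ⟨⟨c, hc⟩, h⟩ := (IsLocalization.map_eq_zero_iff p.primeCompl S b).mp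
      (hmap b (hB ▸ Submodule.subset_span hb))
    exact ⟨c, hc, h⟩
  choose f hf1 hf2 using key
  set s : R := ∏ b ∈ B.attach, f b.1 b.2 with hsdef
  have hsp : s ∈ p.primeCompl := Submonoid.prod_mem _ (fun b _ => hf1 b.1 b.2)
  have hs0 : s ≠ 0 := fun h => hsp (h ▸ p.zero_mem)
  apply aux_descend I n s hs0
  have hle : I ^ n ≤ Submodule.comap (LinearMap.lsmul R R s) ⊥ := by
    rw [← hB, Submodule.span_le]
    intro b hb
    simp only [SetLike.mem_coe, Submodule.mem_comap, Submodule.mem_bot, LinearMap.lsmul_apply,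
      smul_eq_mul]
    have ht0 : f b hb ∣ s := by
      rw [hsdef]
      exact Finset.dvd_prod_of_mem (fun x => f x.1 x.2) (Finset.mem_attach B ⟨b, hb⟩)
    obtain ⟨t, ht⟩ := ht0
    rw [ht, mul_assoc, mul_comm t b, ← mul_assoc, hf2 b hb, zero_mul]
  intro a ha
  simpa using hle ha

lemma aux_len_le {R : Type u} [CommRing R] [IsLocalRing R] [IsNoetherianRing R]
    (hdim : ringKrullDim R = 1) (N : Type v) [AddCommGroup N] [Module R N] [Module.Finite R N]
    (rs : List R) (hmem : ∀ r ∈ rs, r ∈ (⊥ : Ideal R).jacobson)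
    (hreg : RingTheory.Sequence.IsRegular N rs) : rs.length ≤ 1 := by
  by_contra hlen
  push_neg at hlen
  match rs, hlen with
  | a :: b :: t, _ =>
  have hjac : (⊥ : Ideal R).jacobson = maximalIdeal R :=
    IsLocalRing.jacobson_eq_maximalIdeal ⊥ bot_ne_top
  rw [isRegular_cons_iff] at hreg
  obtain ⟨ha, hreg2⟩ := hreg
  set Q := QuotSMulTop a N with hQ
  have hb : IsSMulRegular Q b :=
    ((isWeaklyRegular_cons_iff Q b t).mp hreg2.toIsWeaklyRegular).1
  have hQsub : ¬ Subsingleton Q := by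
    intro hq
    haveI := hq
    exact hreg2.top_ne_smul (Subsingleton.elim _ _)
  apply hQsub
  -- every prime over the annihilator of Q is the maximal ideal
  have hAm : ∀ p : Ideal R, p.IsPrime → Module.annihilator R Q ≤ p → p = maximalIdeal R := by
    intro p hp hAp
    by_contra hne
    have hpmin := aux_minimal hdim hp hne
    have haA : a ∈ Module.annihilator R Q := by
      rw [Module.mem_annihilator]
      intro q
      obtain ⟨x, rfl⟩ := Submodule.Quotient.mk_surjective _ q
      rw [← Submodule.Quotient.mk_smul, Submodule.Quotient.mk_eq_zero]
      exact Submodule.smul_mem_pointwise_smul x a ⊤ Submodule.mem_top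
    obtain ⟨s, hsp, k, hsk⟩ := aux_nilp hpmin (hAp haA)
    have hsN : ∀ x : N, s • x = 0 := by
      intro x
      have h9 : a ^ k • (s • x) = a ^ k • (0 : N) := by
        rw [smul_smul, mul_comm, hsk, zero_smul, smul_zero]
      exact ha.pow k h9
    have hsA : s ∈ Module.annihilator R Q := by
      rw [Module.mem_annihilator]
      intro q
      obtain ⟨x, rfl⟩ := Submodule.Quotient.mk_surjective _ q
      rw [← Submodule.Quotient.mk_smul, hsN x, Submodule.Quotient.mk_zero]
    exact hsp (hAp hsA)
  have hrad : maximalIdeal R ≤ (Module.annihilator R Q).radical := by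
    intro z hz
    rw [Ideal.radical_eq_sInf]
    apply Submodule.mem_sInf.mpr
    rintro J ⟨hJ1, hJ2⟩
    exact (hAm J hJ2 hJ1) ▸ hz
  obtain ⟨n, hn⟩ := Ideal.exists_pow_le_of_le_radical_of_fg hrad (IsNoetherian.noetherian _)
  have hbA : b ^ n ∈ Module.annihilator R Q := by
    apply hn
    exact Ideal.pow_mem_pow (hjac ▸ hmem b (by simp)) n
  rw [Module.mem_annihilator] at hbA
  have h8 : ∀ q1 q2 : Q, b ^ n • q1 = b ^ n • q2 := fun q1 q2 => by rw [hbA q1, hbA q2]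
  exact ⟨fun q1 q2 => (hb.pow n) (show (fun x => b ^ n • x) q1 = (fun x => b ^ n • x) q2 from h8 q1 q2)⟩

lemma muMod_eq_zero_of_subsingleton (A : Type u) [CommRing A] (Q : Type v) [AddCommGroup Q]
    [Module A Q] [Subsingleton Q] : Paper.muMod A Q = 0 := by
  apply Nat.sInf_eq_zero.mpr
  left
  refine ⟨Fin.elim0, ?_⟩
  rw [Submodule.eq_top_iff']
  intro x
  rw [Subsingleton.elim x 0]
  exact Submodule.zero_mem _

end AuxLemmas

open Paper in
/-- Remark, part (b): over a one-dimensional Cohen–Macaulay local ring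
with a canonical module, if `I` is a strongly Cohen–Macaulay ideal and `M` a torsion-free
finite module with `(0 :_M I) ≠ 0`, then `δ_R(M/(0 :_M I)) = 0`. -/
theorem statement_2 (R : Type u) [CommRing R] [IsLocalRing R] [IsNoetherianRing R]
    (hCM : IsCMRing R) (hcan : HasCanonicalModule R)
    (hdim : ringKrullDim R = 1)
    (I : Ideal R) (hSCM : IsStronglyCM R I)
    (M : Type u) [AddCommGroup M] [Module R M] [Module.Finite R M]
    (hM : TorsionFree R M)
    (hne : Submodule.torsionBySet R M (I : Set R) ≠ ⊥) :
    delta R (M ⧸ Submodule.torsionBySet R M (I : Set R)) = 0 := by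
  classical
  set T : Submodule R M := Submodule.torsionBySet R M (I : Set R) with hTdef
  -- trivial case: the quotient is subsingleton
  by_cases hsub : Subsingleton (M ⧸ T)
  · rw [delta]
    haveI : Subsingleton ((M ⧸ T) ⧸ cmSubmodule R (M ⧸ T)) :=
      (Submodule.Quotient.mk_surjective _).subsingleton
    exact muMod_eq_zero_of_subsingleton R _
  haveI hNnt : Nontrivial (M ⧸ T) := not_subsingleton_iff_nontrivial.mp hsub
  have hjac : (⊥ : Ideal R).jacobson = IsLocalRing.maximalIdeal R :=
    IsLocalRing.jacobson_eq_maximalIdeal ⊥ bot_ne_top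
  -- Step A : a regular element r₀ in the maximal ideal
  have hdepthR : depth R R = (1 : ℕ∞) := by
    have h := hCM
    rw [IsCMRing, hdim] at h
    exact_mod_cast h
  have hex : ∃ r : R, r ∈ (⊥ : Ideal R).jacobson ∧ IsSMulRegular R r := by
    have hpos : ∃ n ∈ {n : ℕ∞ | ∃ rs : List R, (∀ r ∈ rs, r ∈ (⊥ : Ideal R).jacobson) ∧
        RingTheory.Sequence.IsRegular R rs ∧ (rs.length : ℕ∞) = n}, n ≠ 0 := by
      by_contra h
      push_neg at h
      have h2 : depth R R ≤ 0 := by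
        rw [depth]
        exact sSup_le fun n hn => le_of_eq (h n hn)
      rw [hdepthR] at h2
      norm_num at h2
    obtain ⟨n, ⟨rs, hmem, hreg, hlen⟩, hn0⟩ := hpos
    match rs, hreg, hmem, hlen with
    | [], _, _, hlen => exact absurd (by simpa using hlen.symm) hn0
    | r :: rest, hreg, hmem, _ =>
      exact ⟨r, hmem r (by simp),
        ((RingTheory.Sequence.isWeaklyRegular_cons_iff R r rest).mp hreg.toIsWeaklyRegular).1⟩
  obtain ⟨r₀, hr₀j, hr₀reg⟩ := hex
  have hr₀m : r₀ ∈ IsLocalRing.maximalIdeal R := hjac ▸ hr₀j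
  have hr₀nzd : r₀ ∈ nonZeroDivisors R := by
    rw [mem_nonZeroDivisors_iff_right]
    intro z hz
    exact hr₀reg (show r₀ • z = r₀ • 0 by rw [smul_eq_mul, mul_comm, hz, smul_zero])
  -- Step B : a nonzero y ∈ R with I y = 0
  obtain ⟨x, hxT, hx0⟩ := (Submodule.ne_bot_iff T).mp hne
  have hxI : ∀ a ∈ I, a • x = 0 := by
    intro a ha
    exact (Submodule.mem_torsionBySet_iff _ _).mp hxT ⟨a, ha⟩
  obtain ⟨P, hPass, hPle⟩ := exists_le_isAssociatedPrime_of_isNoetherianRing R x hx0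
  haveI hPprime : P.IsPrime := hPass.1
  have hIP : I ≤ P := by
    refine le_trans ?_ hPle
    intro a ha
    exact Submodule.mem_colon_singleton.mpr (by simpa using hxI a ha)
  have hPm : P ≠ IsLocalRing.maximalIdeal R := by
    intro hPmax
    obtain ⟨-, z, hz⟩ := hPass
    have hz0 : z ≠ 0 := by
      rintro rfl
      rw [Submodule.colon_singleton_zero, Ideal.radical_top] at hz
      exact hPprime.ne_top hz
    have hr₀P : r₀ ∈ P := hPmax ▸ hr₀m
    rw [hz] at hr₀P
    obtain ⟨k, hk⟩ := hr₀P
    have h3 : r₀ ^ k • z = 0 := by simpa using Submodule.mem_colon_singleton.mp hk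
    exact hz0 (hM (r₀ ^ k) (pow_mem hr₀nzd k) (show r₀ ^ k • z = r₀ ^ k • 0 by rw [h3, smul_zero]))
  obtain ⟨y, hy0, hyI⟩ := exists_ann (aux_minimal hdim hPprime hPm) hIP
  -- Step C : r₀ is regular on M ⧸ T
  have hregN : IsSMulRegular (M ⧸ T) r₀ := by
    intro u v huv
    obtain ⟨xu, rfl⟩ := Submodule.Quotient.mk_surjective T u
    obtain ⟨xv, rfl⟩ := Submodule.Quotient.mk_surjective T v
    have huv' : r₀ • xu - r₀ • xv ∈ T := by
      rw [← Submodule.Quotient.eq]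
      simpa [Submodule.Quotient.mk_smul] using huv
    rw [Submodule.Quotient.eq]
    rw [hTdef, Submodule.mem_torsionBySet_iff] at huv' ⊢
    rintro ⟨a, ha⟩
    have h4 : r₀ • ((a : R) • (xu - xv)) = r₀ • (0 : M) := by
      rw [smul_zero, smul_comm, smul_sub, smul_sub]
      simpa [smul_sub] using huv' ⟨a, ha⟩
    exact hM r₀ hr₀nzd h4
  -- Step D : [r₀] is a regular sequence on M ⧸ T
  have hne1 : (⊤ : Submodule R (M ⧸ T)) ≠ Ideal.ofList [r₀] • ⊤ := by
    rw [Ideal.ofList_singleton]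
    apply Submodule.top_ne_ideal_smul_of_le_jacobson_annihilator
    refine le_trans ?_ (Ideal.jacobson_mono bot_le)
    rw [Ideal.span_le]
    simpa using hr₀j
  have hregN1 : RingTheory.Sequence.IsRegular (M ⧸ T) [r₀] :=
    { toIsWeaklyRegular := (RingTheory.Sequence.isWeaklyRegular_singleton_iff _ r₀).mpr hregN
      top_ne_smul := hne1 }
  -- Step E : depth of M ⧸ T is 1
  have hdepthN : depth R (M ⧸ T) = (1 : ℕ∞) := by
    rw [depth]
    apply le_antisymm
    · apply sSup_le
      rintro n ⟨rs, hmem, hreg, hlen⟩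
      rw [← hlen]
      have h5 : rs.length ≤ 1 := aux_len_le hdim (M ⧸ T) rs hmem hreg
      exact_mod_cast h5
    · apply le_sSup
      exact ⟨[r₀], by simpa using hr₀j, hregN1, by simp⟩
  -- Step F : M ⧸ T is maximal Cohen–Macaulay
  have hMCM : IsMCM R (M ⧸ T) := by
    refine ⟨inferInstance, hNnt, ?_⟩
    rw [hdepthN, hdim]
    rfl
  -- Step G : M ⧸ T has no nonzero free direct summand
  have hNFS : NoFreeSummand R (M ⧸ T) := by
    intro W W' hcompl hfree
    by_contra hWbot
    haveI : Nontrivial W := Submodule.nontrivial_iff_ne_bot.mpr hWbot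
    let b := Module.Free.chooseBasis R W
    obtain ⟨i₀⟩ := b.index_nonempty
    set π := Submodule.linearProjOfIsCompl W W' hcompl with hπ
    obtain ⟨v, hv⟩ := Submodule.Quotient.mk_surjective T ((b i₀ : W) : M ⧸ T)
    have hyb : y • b i₀ ≠ 0 := by
      intro h
      apply hy0
      have h7 := congrArg (fun w => (b.repr w) i₀) h
      simpa [Module.Basis.repr_self] using h7
    have hyv : y • v ∈ T := by
      rw [hTdef, Submodule.mem_torsionBySet_iff]
      rintro ⟨a, ha⟩
      show (a : R) • y • v = 0
      rw [smul_smul, hyI a ha, zero_smul]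
    have h5 : π (Submodule.Quotient.mk (y • v)) = y • b i₀ := by
      have : (Submodule.Quotient.mk (y • v) : M ⧸ T) = y • Submodule.Quotient.mk v :=
        Submodule.Quotient.mk_smul T y v
      rw [this, map_smul, hv]
      exact congrArg _ (Submodule.projectionOnto_apply_left hcompl (b i₀))
    have h6 : (Submodule.Quotient.mk (y • v) : M ⧸ T) = 0 :=
      (Submodule.Quotient.mk_eq_zero T).mpr hyv
    rw [h6, map_zero] at h5
    exact hyb h5.symm
  -- Step H : conclude
  have hcm : cmSubmodule R (M ⧸ T) = ⊤ := by
    apply top_unique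
    rw [cmSubmodule]
    apply le_sSup
    exact ⟨M ⧸ T, inferInstance, inferInstance, LinearMap.id, hMCM, hNFS, LinearMap.range_id.symm⟩
  rw [delta]
  haveI : Subsingleton ((M ⧸ T) ⧸ cmSubmodule R (M ⧸ T)) := by
    rw [hcm]
    exact Submodule.Quotient.subsingleton_iff.mpr rfl
  exact muMod_eq_zero_of_subsingleton R _
end

section
/- Let (R, 𝔪, k) be a Cohen–Macaulay local ring and let I be a strongly Cohen–Macaulay ideal of R with Ann_R(I) ≠ 0. If x ∈ R is a non-zero divisor on R and on all Koszul homology modules H_i(I, R), then (xR :_R I) = xR + (0 :_R I); in particular xR ∩ (0 :_R I) = x(0 :_R I) and R/(xR :_R I) ≅ (R/(0 :_R I)) ⊗_R R/xR. -/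
/-! Background definitions: depth, (maximal) Cohen–Macaulay modules and rings,
Koszul homology of an ideal, strongly Cohen–Macaulay ideals, Auslander's
delta invariant, canonical modules, finite injective dimension, etc. -/

open CategoryTheory Opposite Pointwise

universe u v

open Finset in
lemma attachSumEq {α : Type*} [DecidableEq α] {M : Type*} [AddCommMonoid M] (s : Finset α)
    (f : {x // x ∈ s} → M) :
    ∑ x ∈ s.attach, f x = ∑ x ∈ s, (if h : x ∈ s then f ⟨x, h⟩ else 0) := by
  rw [← Finset.sum_attach s (fun x => if h : x ∈ s then f ⟨x, h⟩ else 0)]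
  exact Finset.sum_congr rfl (fun x _ => by rw [dif_pos x.2])

lemma attachSumSingleton {α : Type*} [DecidableEq α] {M : Type*} [AddCommMonoid M]
    {s : Finset α} {a : α} (hs : s = {a}) (f : {x // x ∈ s} → M) :
    ∑ x ∈ s.attach, f x = f ⟨a, by simp [hs]⟩ := by
  subst hs
  rw [attachSumEq, Finset.sum_singleton, dif_pos (Finset.mem_singleton_self a)]

lemma attachSumPair {α : Type*} [DecidableEq α] {M : Type*} [AddCommMonoid M]
    {s : Finset α} {a b : α} (hab : a ≠ b) (hs : s = {a, b}) (f : {x // x ∈ s} → M) :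
    ∑ x ∈ s.attach, f x = f ⟨a, by simp [hs]⟩ + f ⟨b, by simp [hs]⟩ := by
  subst hs
  rw [attachSumEq, Finset.sum_pair hab,
    dif_pos (Finset.mem_insert_self a {b}),
    dif_pos (by simp : b ∈ ({a, b} : Finset α))]

lemma signEq {R : Type*} [CommRing R] {n : ℕ} {U : Finset (Fin n)} {a b : Fin n}
    (h : a < b) (ha : a ∉ U) :
    ((-1 : R) ^ (U.filter (fun c => c < a)).card
        * (-1 : R) ^ ((insert a U).filter (fun c => c < b)).card)
      = -(((-1 : R) ^ (U.filter (fun c => c < b)).card)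
        * (-1 : R) ^ ((insert b U).filter (fun c => c < a)).card) := by
  rw [Finset.filter_insert, if_pos h, Finset.filter_insert, if_neg (not_lt.mpr h.le),
    Finset.card_insert_of_notMem (fun hmem => ha (Finset.mem_filter.mp hmem).1), pow_succ]
  ring

open Paper in
lemma key_step {R : Type u} [CommRing R] {n : ℕ} (g : Fin (n + 1) → R) (x : R)
    (hx : x ∈ nonZeroDivisors R)
    (hreg : IsSMulRegular (koszulHomology R g R n) x)
    (r : R) (s : Fin (n + 1) → R) (h : ∀ j, r * g j = x * s j) :
    ∃ t : R, ∀ j, s j = g j * t := by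
  classical
  set z : {T : Finset (Fin (n + 1)) // T.card = n} → R :=
    fun T => ∑ j ∈ T.1ᶜ.attach, (-1 : R) ^ (T.1.filter (fun a => a < j.1)).card * s j.1 with hz
  have hA : x • z = koszulD R g R n (fun _ => r) := by
    funext T
    simp only [Pi.smul_apply, smul_eq_mul, hz, koszulD, LinearMap.coe_mk, AddHom.coe_mk,
      Finset.mul_sum]
    refine Finset.sum_congr rfl (fun j _ => ?_)
    linear_combination (-(-1 : R) ^ (T.1.filter (fun a => a < j.1)).card) * h j.1
  have hker : z ∈ LinearMap.ker (koszulDFrom R g R n) := by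
    rw [LinearMap.mem_ker]
    cases n with
    | zero => rfl
    | succ k =>
      have hD : koszulDFrom R g R (k + 1) z = koszulD R g R k z := rfl
      rw [hD]
      have hzero : koszulD R g R k (koszulD R g R (k + 1) (fun _ => r)) = 0 := by
        funext U
        have hcard : U.1ᶜ.card = 2 := by
          rw [Finset.card_compl, U.2, Fintype.card_fin]
          omega
        obtain ⟨a, b, hab, hU⟩ := Finset.card_eq_two.mp hcard
        have ha : a ∉ U.1 := Finset.mem_compl.mp (by rw [hU]; exact Finset.mem_insert_self a {b})
        have hb : b ∉ U.1 := Finset.mem_compl.mp (by rw [hU]; simp)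
        have hia : (insert a U.1)ᶜ = {b} := by
          rw [Finset.compl_insert, hU, Finset.erase_insert (by simp [hab])]
        have hib : (insert b U.1)ᶜ = {a} := by
          rw [Finset.compl_insert, hU, Finset.pair_comm,
            Finset.erase_insert (by simp [hab.symm])]
        simp only [koszulD, LinearMap.coe_mk, AddHom.coe_mk, Pi.zero_apply]
        rw [attachSumPair hab hU]
        rw [attachSumSingleton hia, attachSumSingleton hib]
        simp only [smul_eq_mul]
        rcases hab.lt_or_gt with hlt | hlt
        · have hs := signEq (R := R) (U := U.1) hlt ha
          linear_combination (g a * g b * r) * hs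
        · have hs := signEq (R := R) (U := U.1) hlt hb
          linear_combination (g b * g a * r) * hs
      have hx0 : x • koszulD R g R k z = 0 := by
        rw [← map_smul, hA, hzero]
      funext U
      have hU := congrFun hx0 U
      simp only [Pi.smul_apply, smul_eq_mul, Pi.zero_apply] at hU ⊢
      exact hx.2 _ (by rw [mul_comm]; exact hU)
  have hreg' : IsSMulRegular
      ((LinearMap.ker (koszulDFrom R g R n)) ⧸
        Submodule.comap (LinearMap.ker (koszulDFrom R g R n)).subtype
          (LinearMap.range (koszulD R g R n))) x := hreg
  set B := Submodule.comap (LinearMap.ker (koszulDFrom R g R n)).subtype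
      (LinearMap.range (koszulD R g R n)) with hB
  set z' : LinearMap.ker (koszulDFrom R g R n) := ⟨z, hker⟩ with hz'
  have h0 : B.mkQ (x • z') = 0 := by
    rw [Submodule.mkQ_apply, Submodule.Quotient.mk_eq_zero]
    refine Submodule.mem_comap.mpr ⟨(fun _ => r), ?_⟩
    rw [← hA]; rfl
  have hmk : B.mkQ z' = 0 := by
    apply hreg'
    show x • B.mkQ z' = x • 0
    rw [smul_zero, ← map_smul]
    exact h0
  have hz'B : z' ∈ B := by
    rwa [Submodule.mkQ_apply, Submodule.Quotient.mk_eq_zero] at hmk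
  obtain ⟨F, hF⟩ := Submodule.mem_comap.mp hz'B
  have hF' : koszulD R g R n F = z := hF
  have hcardu : (Finset.univ : Finset (Fin (n + 1))).card = n + 1 := by simp
  refine ⟨F ⟨Finset.univ, hcardu⟩, fun j => ?_⟩
  have hT : (({j} : Finset (Fin (n + 1)))ᶜ).card = n := by
    rw [Finset.card_compl, Fintype.card_fin, Finset.card_singleton]
    omega
  have hFT := congrFun hF' ⟨({j} : Finset (Fin (n + 1)))ᶜ, hT⟩
  have hcc : ((({j} : Finset (Fin (n + 1)))ᶜ)ᶜ) = {j} := compl_compl _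
  have hFeq : ∀ (hc : (insert j (({j} : Finset (Fin (n + 1)))ᶜ)).card = n + 1),
      F ⟨insert j (({j} : Finset (Fin (n + 1)))ᶜ), hc⟩ = F ⟨Finset.univ, hcardu⟩ :=
    fun hc => congrArg F (Subtype.ext (Finset.insert_compl_self j))
  simp only [koszulD, LinearMap.coe_mk, AddHom.coe_mk, hz] at hFT
  rw [attachSumSingleton hcc, attachSumSingleton hcc] at hFT
  rw [hFeq] at hFT
  simp only [smul_eq_mul] at hFT
  have heps : (-1 : R) ^ ((({j} : Finset (Fin (n + 1)))ᶜ).filter (fun a => a < j)).card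
      * (-1 : R) ^ ((({j} : Finset (Fin (n + 1)))ᶜ).filter (fun a => a < j)).card = 1 := by
    rw [← pow_add]
    exact Even.neg_one_pow ⟨_, rfl⟩
  linear_combination (g j * F ⟨Finset.univ, hcardu⟩ - s j) * heps
    - ((-1 : R) ^ ((({j} : Finset (Fin (n + 1)))ᶜ).filter (fun a => a < j)).card) * hFT


open Paper in
/-- if `I` is a strongly Cohen–Macaulay ideal with `Ann_R I ≠ 0` and `x` is a
non-zero-divisor on `R` and on all Koszul homologies `Hᵢ(I, R)`, then
`(xR :_R I) = xR + (0 :_R I)`, `xR ∩ (0 :_R I) = x·(0 :_R I)`, and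
`R/(xR :_R I) ≅ (R/(0 :_R I)) ⊗_R R/xR`. -/
theorem statement_7 (R : Type u) [CommRing R] [IsLocalRing R] [IsNoetherianRing R]
    (hCM : IsCMRing R) (I : Ideal R) (hSCM : IsStronglyCM R I)
    (hann : I.annihilator ≠ ⊥)
    (x : R) (hx : x ∈ nonZeroDivisors R)
    (m : ℕ) (g : Fin m → R) (hg : Ideal.span (Set.range g) = I)
    (hreg : ∀ i : ℕ, IsSMulRegular (koszulHomology R g R i) x) :
    Submodule.colon (Ideal.span {x} : Ideal R) (I : Submodule R R)
        = Ideal.span {x} ⊔ I.annihilator ∧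
    (Ideal.span {x} ⊓ I.annihilator : Ideal R) = x • I.annihilator ∧
    Nonempty ((R ⧸ Submodule.colon (Ideal.span {x} : Ideal R) (I : Submodule R R)) ≃ₗ[R]
      TensorProduct R (R ⧸ I.annihilator) (R ⧸ (Ideal.span {x} : Ideal R))) := by
  classical
  -- Part 1
  have part1 : Submodule.colon (Ideal.span {x} : Ideal R) (I : Submodule R R)
      = Ideal.span {x} ⊔ I.annihilator := by
    apply le_antisymm
    · intro r hr
      rw [Submodule.mem_colon] at hr
      have hgj : ∀ j, g j ∈ I := fun j => hg ▸ Ideal.subset_span (Set.mem_range_self j)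
      have hs : ∀ j, ∃ c, r * g j = x * c := by
        intro j
        have := hr (g j) (hgj j)
        rw [smul_eq_mul] at this
        exact Ideal.mem_span_singleton.mp this
      choose s hsx using hs
      have key : ∃ t : R, ∀ j, s j = g j * t := by
        cases m with
        | zero => exact ⟨0, fun j => j.elim0⟩
        | succ n => exact key_step g x hx (hreg n) r s hsx
      obtain ⟨t, ht⟩ := key
      have hmem : r - x * t ∈ I.annihilator := by
        rw [← hg, ← Ideal.submodule_span_eq, Submodule.mem_annihilator_span]
        rintro ⟨p, j, rfl⟩
        have h1 := hsx j
        have h2 := ht j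
        simp only [smul_eq_mul]
        linear_combination h1 + x * h2
      refine Submodule.mem_sup.mpr ⟨x * t, Ideal.mem_span_singleton.mpr ⟨t, rfl⟩,
        r - x * t, hmem, by ring⟩
    · refine sup_le ?_ ?_
      · rw [Ideal.span_le]
        rintro y hy
        rw [Set.mem_singleton_iff] at hy
        subst hy
        rw [SetLike.mem_coe, Submodule.mem_colon]
        intro p _
        exact Ideal.mem_span_singleton.mpr ⟨p, by rw [smul_eq_mul]⟩
      · intro r hr
        rw [Submodule.mem_colon]
        intro p hp
        rw [Submodule.mem_annihilator] at hr
        rw [hr p hp]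
        exact zero_mem _
  refine ⟨part1, ?_, ?_⟩
  -- Part 2
  · apply le_antisymm
    · intro a ha
      rw [Submodule.mem_inf] at ha
      obtain ⟨ha1, ha2⟩ := ha
      obtain ⟨b, hb⟩ := Ideal.mem_span_singleton.mp ha1
      have hbann : b ∈ I.annihilator := by
        rw [Submodule.mem_annihilator] at ha2 ⊢
        intro p hp
        have : x * (b * p) = 0 := by
          have := ha2 p hp
          rw [smul_eq_mul] at this
          linear_combination this - p * hb
        simp only [smul_eq_mul]
        exact hx.2 _ (by rw [mul_comm]; exact this)
      rw [← SetLike.mem_coe, Submodule.coe_pointwise_smul, Set.mem_smul_set]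
      exact ⟨b, hbann, by rw [smul_eq_mul, ← hb]⟩
    · intro a ha
      rw [← SetLike.mem_coe, Submodule.coe_pointwise_smul, Set.mem_smul_set] at ha
      obtain ⟨b, hb, rfl⟩ := ha
      rw [smul_eq_mul]
      refine Submodule.mem_inf.mpr ⟨Ideal.mem_span_singleton.mpr ⟨b, rfl⟩, ?_⟩
      exact Ideal.mul_mem_left _ x hb
  -- Part 3
  · set A := I.annihilator with hA
    set X := (Ideal.span {x} : Ideal R) with hX
    have hsm : X • (⊤ : Submodule R (R ⧸ A)) = Submodule.map A.mkQ X := by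
      rw [← Submodule.range_mkQ A, ← Submodule.map_top, ← Submodule.map_smul'']
      congr 1
      rw [Ideal.smul_top_eq_map, Algebra.algebraMap_self, Ideal.map_id,
        Submodule.restrictScalars_self]
    exact ⟨(Submodule.quotEquivOfEq _ _ (part1.trans (sup_comm _ _))) ≪≫ₗ
      (Submodule.quotientQuotientEquivQuotientSup (A : Submodule R R) X).symm ≪≫ₗ
      (Submodule.quotEquivOfEq _ _ hsm.symm) ≪≫ₗ
      (TensorProduct.tensorQuotEquivQuotSMul (R ⧸ A) X).symm⟩
end
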